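/- Let u, w, y_i, y_j be continuous real functions on [z₀, z₁] with u continuously differentiable, and suppose -(u y_i')' + v y_i = λ_i w y_i and -(u y_j')' + v y_j = λ_j w y_j on [z₀, z₁], with λ_i ≠ λ_j, and both y_i, y_j satisfy the boundary conditions a₀y(z₀) - a₁u(z₀)y'(z₀) = 0 and b₀y(z₁) + b₁u(z₁)y'(z₁) = 0 with (a₀, a₁) ≠ (0,0) and (b₀, b₁) ≠ (0,0). Then ∫_{z₀}^{z₁} w(z)·y_i(z)·y_j(z) dz = 0. -/

import Mathlib

lemma wronskian_zero (a b x1 y1 x2 y2 : ℝ) (hab : (a, b) ≠ (0, 0))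
    (h1 : a * x1 - b * y1 = 0) (h2 : a * x2 - b * y2 = 0) :
    x1 * y2 - x2 * y1 = 0 := by
  have hA : a * (x1 * y2 - x2 * y1) = y2 * (a * x1 - b * y1) - y1 * (a * x2 - b * y2) := by ring
  have hB : b * (x1 * y2 - x2 * y1) = x2 * (a * x1 - b * y1) - x1 * (a * x2 - b * y2) := by ring
  rw [h1, h2] at hA hB
  rcases eq_or_ne a 0 with ha | ha
  · rcases eq_or_ne b 0 with hb | hb
    · exact absurd (by simp [ha, hb]) hab
    · have := hB; field_simp at this ⊢; simpa [hb] using mul_eq_zero.mp (by linarith : b * (x1 * y2 - x2 * y1) = 0)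
  · simpa [ha] using mul_eq_zero.mp (by linarith : a * (x1 * y2 - x2 * y1) = 0)

theorem stmt_15 (z₀ z₁ : ℝ) (hz : z₀ < z₁)
    (u v w yi yj : ℝ → ℝ) (lami lamj a₀ a₁ b₀ b₁ : ℝ)
    (hu : ContDiff ℝ 1 u)
    (hw : ContinuousOn w (Set.Icc z₀ z₁))
    (hyi : ContDiff ℝ 2 yi) (hyj : ContDiff ℝ 2 yj)
    (hodei : ∀ z ∈ Set.Icc z₀ z₁,
      -(deriv (fun t => u t * deriv yi t) z) + v z * yi z = lami * w z * yi z)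
    (hodej : ∀ z ∈ Set.Icc z₀ z₁,
      -(deriv (fun t => u t * deriv yj t) z) + v z * yj z = lamj * w z * yj z)
    (hlam : lami ≠ lamj)
    (ha : (a₀, a₁) ≠ (0, 0)) (hbb : (b₀, b₁) ≠ (0, 0))
    (hbci : a₀ * yi z₀ - a₁ * u z₀ * deriv yi z₀ = 0)
    (hbci' : b₀ * yi z₁ + b₁ * u z₁ * deriv yi z₁ = 0)
    (hbcj : a₀ * yj z₀ - a₁ * u z₀ * deriv yj z₀ = 0)
    (hbcj' : b₀ * yj z₁ + b₁ * u z₁ * deriv yj z₁ = 0) :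
    ∫ z in z₀..z₁, w z * yi z * yj z = 0 := by
  set A : ℝ → ℝ := fun t => u t * deriv yi t with hA
  set B : ℝ → ℝ := fun t => u t * deriv yj t with hB
  have hyi' : ContDiff ℝ 1 (deriv yi) := ((contDiff_succ_iff_deriv (n:=1)).mp (by exact_mod_cast hyi)).2.2
  have hyj' : ContDiff ℝ 1 (deriv yj) := ((contDiff_succ_iff_deriv (n:=1)).mp (by exact_mod_cast hyj)).2.2
  have hdA : Differentiable ℝ A := (hu.differentiable one_ne_zero).mul (hyi'.differentiable one_ne_zero)
  have hdB : Differentiable ℝ B := (hu.differentiable one_ne_zero).mul (hyj'.differentiable one_ne_zero)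
  set P : ℝ → ℝ := fun t => A t * yj t - B t * yi t with hP
  have hderiv : ∀ z ∈ Set.uIcc z₀ z₁,
      HasDerivAt P ((lamj - lami) * (w z * yi z * yj z)) z := by
    intro z hzz
    rw [Set.uIcc_of_le hz.le] at hzz
    have h1 : HasDerivAt P (deriv A z * yj z + A z * deriv yj z -
        (deriv B z * yi z + B z * deriv yi z)) z := by
      exact (((hdA z).hasDerivAt.mul ((hyj.differentiable (by norm_num) z).hasDerivAt)).sub
        ((hdB z).hasDerivAt.mul ((hyi.differentiable (by norm_num) z).hasDerivAt)))
    have e1 := hodei z hzz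
    have e2 := hodej z hzz
    convert h1 using 1
    simp only [hA, hB] at e1 e2 ⊢
    linear_combination yj z * e1 - yi z * e2
  have hint : IntervalIntegrable (fun z => (lamj - lami) * (w z * yi z * yj z))
      MeasureTheory.volume z₀ z₁ := by
    apply ContinuousOn.intervalIntegrable
    rw [Set.uIcc_of_le hz.le]
    exact continuousOn_const.mul ((hw.mul hyi.continuous.continuousOn).mul
      hyj.continuous.continuousOn)
  have key := intervalIntegral.integral_eq_sub_of_hasDerivAt hderiv hint
  have hP0 : P z₀ = 0 := by
    have := wronskian_zero a₀ a₁ (yi z₀) (u z₀ * deriv yi z₀) (yj z₀) (u z₀ * deriv yj z₀)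
      ha (by linarith) (by linarith)
    simp only [hP, hA, hB]
    linarith
  have hP1 : P z₁ = 0 := by
    have hbb' : (b₀, -b₁) ≠ (0, 0) := by
      intro h
      apply hbb
      have h1 : b₀ = 0 := congrArg Prod.fst h
      have h2 : -b₁ = 0 := congrArg Prod.snd h
      simp [h1, neg_eq_zero.mp h2]
    have := wronskian_zero b₀ (-b₁) (yi z₁) (u z₁ * deriv yi z₁) (yj z₁) (u z₁ * deriv yj z₁)
      hbb' (by linarith) (by linarith)
    simp only [hP, hA, hB]
    linarith
  rw [hP1, hP0, sub_zero, intervalIntegral.integral_const_mul] at key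
  have hne : lamj - lami ≠ 0 := sub_ne_zero.mpr (Ne.symm hlam)
  exact (mul_eq_zero.mp key).resolve_left hne
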